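/- Let A be a Bernoulli(π) random variable, X a random vector independent of A with E(X)=0, and Y square-integrable. Let (α,β,γ,δ) minimize E[(Y − α − βA − γᵀX − A δᵀX)²] over a constrained set where γ ∈ Γ and δ ∈ Δ, with Γ and Δ products of copies of ℝ and singletons. Then β = E(Y|A=1) − E(Y|A=0). That is, the treatment coefficient equals the average treatment effect regardless of which coordinates of γ and δ are fixed. -/

import Mathlib

open MeasureTheory ProbabilityTheory

lemma my_arith (c s : ℝ) (hc : 0 < c) (h : ∀ t : ℝ, 0 ≤ -(2*t*s) + t^2*c) : s = 0 := by
  have h1 := h (s/c)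
  have hc' : c ≠ 0 := ne_of_gt hc
  have e : -(2*(s/c)*s) + (s/c)^2*c = -(s^2)/c := by field_simp; ring
  rw [e] at h1
  have hs2 : s^2 ≤ 0 := by
    rcases div_nonneg_iff.mp h1 with ⟨h', _⟩ | ⟨_, h'⟩
    · linarith
    · linarith
  exact pow_eq_zero_iff two_ne_zero |>.mp (le_antisymm hs2 (sq_nonneg s))

lemma my_intmul {Ω : Type*} [MeasurableSpace Ω] {μ : Measure Ω} {f g : Ω → ℝ}
    (hf : MemLp f 2 μ) (hg : MemLp g 2 μ) : Integrable (fun ω => f ω * g ω) μ := by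
  have hadd : Integrable (fun ω => f ω ^ 2 + g ω ^ 2) μ := hf.integrable_sq.add hg.integrable_sq
  have h : Integrable (fun ω => (1/2 : ℝ) * (f ω ^ 2 + g ω ^ 2)) μ := hadd.const_mul _
  refine h.mono (hf.aestronglyMeasurable.mul hg.aestronglyMeasurable) (ae_of_all _ fun ω => ?_)
  rw [Real.norm_eq_abs, Real.norm_eq_abs, abs_mul,
    abs_of_nonneg (by positivity : (0:ℝ) ≤ 1 / 2 * (f ω ^ 2 + g ω ^ 2))]
  nlinarith [sq_nonneg (|f ω| - |g ω|), sq_abs (f ω), sq_abs (g ω), abs_nonneg (f ω),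
    abs_nonneg (g ω)]

lemma normal_eq {Ω : Type*} [MeasurableSpace Ω] (μ : Measure Ω)
    (Z W : Ω → ℝ) (hZ : MemLp Z 2 μ) (hW : MemLp W 2 μ) (c : ℝ) (hc : 0 < c)
    (hcW : ∫ ω, W ω ^ 2 ∂μ = c)
    (hle : ∀ t : ℝ, ∫ ω, Z ω ^ 2 ∂μ ≤ ∫ ω, (Z ω - t * W ω) ^ 2 ∂μ) :
    ∫ ω, Z ω * W ω ∂μ = 0 := by
  have intZ2 := hZ.integrable_sq
  have intW2 := hW.integrable_sq
  have intZW : Integrable (fun ω => Z ω * W ω) μ := my_intmul hZ hW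
  apply my_arith c _ hc
  intro t
  have h1 := hle t
  have i1 : Integrable (fun ω => Z ω ^ 2 - 2*t * (Z ω * W ω)) μ := intZ2.sub (intZW.const_mul _)
  have i2 : Integrable (fun ω => t^2 * (W ω ^ 2)) μ := intW2.const_mul _
  have expand : ∫ ω, (Z ω - t * W ω) ^ 2 ∂μ
      = ∫ ω, Z ω ^ 2 ∂μ + (-(2*t*(∫ ω, Z ω * W ω ∂μ)) + t^2*c) := by
    have e : (fun ω => (Z ω - t * W ω) ^ 2)
        =ᵐ[μ] fun ω => (Z ω ^ 2 - (2*t) * (Z ω * W ω)) + t^2 * (W ω ^ 2) :=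
      ae_of_all _ fun ω => by ring
    rw [integral_congr_ae e, integral_add i1 i2,
      integral_sub intZ2 (intZW.const_mul (2*t)), integral_const_mul, integral_const_mul, hcW]
    ring
  rw [expand] at h1
  linarith

/-- With a Bernoulli(π) treatment `A` independent of mean-zero covariates `X`,
the treatment coefficient `β` of a *constrained* population least squares fit of `Y` on
`(1, A, X, A·X)` — where each coordinate of `γ` (resp. `δ`) is constrained to lie in `Γ j`
(resp. `Δ j`), each of which is either all of ℝ or a singleton, while `α, β` are
unconstrained — equals the average treatment effect `E(Y|A=1) - E(Y|A=0)`. -/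
theorem stmt_1 {Ω : Type*} [MeasurableSpace Ω] (μ : Measure Ω) [IsProbabilityMeasure μ]
    {p : ℕ} (π : ℝ) (hπ0 : 0 < π) (hπ1 : π < 1)
    (A Y : Ω → ℝ) (X : Ω → Fin p → ℝ)
    (hA01 : ∀ ω, A ω = 0 ∨ A ω = 1)
    (hAmean : ∫ ω, A ω ∂μ = π)
    (hindep : IndepFun A X μ)
    (hXmean : ∀ j, ∫ ω, X ω j ∂μ = 0)
    (hY : MemLp Y 2 μ) (hX : ∀ j, MemLp (fun ω => X ω j) 2 μ)
    (Γ Δ : Fin p → Set ℝ)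
    (hΓ : ∀ j, Γ j = Set.univ ∨ ∃ c, Γ j = {c})
    (hΔ : ∀ j, Δ j = Set.univ ∨ ∃ c, Δ j = {c})
    (α β : ℝ) (γ δ : Fin p → ℝ)
    (hγmem : ∀ j, γ j ∈ Γ j) (hδmem : ∀ j, δ j ∈ Δ j)
    (hmin : ∀ (α' β' : ℝ) (γ' δ' : Fin p → ℝ), (∀ j, γ' j ∈ Γ j) → (∀ j, δ' j ∈ Δ j) →
      ∫ ω, (Y ω - α - β * A ω - (∑ j, γ j * X ω j) - A ω * ∑ j, δ j * X ω j) ^ 2 ∂μ ≤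
      ∫ ω, (Y ω - α' - β' * A ω - (∑ j, γ' j * X ω j) - A ω * ∑ j, δ' j * X ω j) ^ 2 ∂μ) :
    β = (∫ ω, Y ω * A ω ∂μ) / π - (∫ ω, Y ω * (1 - A ω) ∂μ) / (1 - π) := by
  -- basic integrability facts
  have hAint : Integrable A μ := by
    by_contra h
    rw [integral_undef h] at hAmean
    linarith
  have hAsm := hAint.aestronglyMeasurable
  have hAbd : ∀ ω, ‖A ω‖ ≤ 1 := fun ω => by rcases hA01 ω with h | h <;> simp [h]
  have hA2 : MemLp A 2 μ := MemLp.of_bound hAsm 1 (ae_of_all _ hAbd)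
  have hG : MemLp (fun ω => ∑ j, γ j * X ω j) 2 μ :=
    memLp_finset_sum _ (fun j _ => (hX j).const_mul (γ j))
  have hD : MemLp (fun ω => ∑ j, δ j * X ω j) 2 μ :=
    memLp_finset_sum _ (fun j _ => (hX j).const_mul (δ j))
  have hAD : MemLp (fun ω => A ω * ∑ j, δ j * X ω j) 2 μ :=
    MemLp.of_le hD (hAsm.mul hD.aestronglyMeasurable) (ae_of_all _ fun ω => by
      rw [norm_mul]
      exact mul_le_of_le_one_left (norm_nonneg _) (hAbd ω))
  have hZ2 : MemLp
      (fun ω => Y ω - α - β * A ω - (∑ j, γ j * X ω j) - A ω * ∑ j, δ j * X ω j) 2 μ :=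
    (((hY.sub (memLp_const α)).sub (hA2.const_mul β)).sub hG).sub hAD
  have intY : Integrable Y μ := hY.integrable one_le_two
  have intG : Integrable (fun ω => ∑ j, γ j * X ω j) μ := hG.integrable one_le_two
  have intAD : Integrable (fun ω => A ω * ∑ j, δ j * X ω j) μ := hAD.integrable one_le_two
  have intYA : Integrable (fun ω => Y ω * A ω) μ := my_intmul hY hA2
  have intGA : Integrable (fun ω => (∑ j, γ j * X ω j) * A ω) μ := my_intmul hG hA2
  -- independence consequences
  have hmeanG : ∫ ω, (∑ j, γ j * X ω j) ∂μ = 0 := by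
    rw [integral_finset_sum _ (fun j _ => ((hX j).integrable one_le_two).const_mul (γ j))]
    simp [integral_const_mul, hXmean]
  have hmeanD : ∫ ω, (∑ j, δ j * X ω j) ∂μ = 0 := by
    rw [integral_finset_sum _ (fun j _ => ((hX j).integrable one_le_two).const_mul (δ j))]
    simp [integral_const_mul, hXmean]
  have hmesG : Measurable (fun v : Fin p → ℝ => ∑ j, γ j * v j) :=
    Finset.measurable_sum (f := fun j (v : Fin p → ℝ) => γ j * v j) _ (fun j _ => by fun_prop)
  have hmesD : Measurable (fun v : Fin p → ℝ => ∑ j, δ j * v j) :=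
    Finset.measurable_sum (f := fun j (v : Fin p → ℝ) => δ j * v j) _ (fun j _ => by fun_prop)
  have hindG : IndepFun A (fun ω => ∑ j, γ j * X ω j) μ := by
    have h := hindep.comp measurable_id hmesG
    exact h
  have hindD : IndepFun A (fun ω => ∑ j, δ j * X ω j) μ := by
    have h := hindep.comp measurable_id hmesD
    exact h
  have hintAG : ∫ ω, A ω * (∑ j, γ j * X ω j) ∂μ = 0 := by
    have h := hindG.integral_mul_eq_mul_integral hAsm hG.aestronglyMeasurable
    simp only [Pi.mul_apply] at h
    calc ∫ ω, A ω * (∑ j, γ j * X ω j) ∂μ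
        = (∫ ω, A ω ∂μ) * ∫ ω, (∑ j, γ j * X ω j) ∂μ := h
      _ = 0 := by rw [hmeanG, mul_zero]
  have hintAD2 : ∫ ω, A ω * (∑ j, δ j * X ω j) ∂μ = 0 := by
    have h := hindD.integral_mul_eq_mul_integral hAsm hD.aestronglyMeasurable
    simp only [Pi.mul_apply] at h
    calc ∫ ω, A ω * (∑ j, δ j * X ω j) ∂μ
        = (∫ ω, A ω ∂μ) * ∫ ω, (∑ j, δ j * X ω j) ∂μ := h
      _ = 0 := by rw [hmeanD, mul_zero]
  have hintGA2 : ∫ ω, (∑ j, γ j * X ω j) * A ω ∂μ = 0 := by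
    rw [integral_congr_ae (ae_of_all μ (fun ω => mul_comm (∑ j, γ j * X ω j) (A ω)))]
    exact hintAG
  -- E[A^2] = π
  have hA2ptw : ∀ ω, A ω ^ 2 = A ω := by
    intro ω; rcases hA01 ω with h | h <;> rw [h] <;> norm_num
  have hA2mean : ∫ ω, A ω ^ 2 ∂μ = π := by
    rw [integral_congr_ae (ae_of_all μ hA2ptw), hAmean]
  -- first normal equation
  have eq1 : ∫ ω, (Y ω - α - β * A ω - (∑ j, γ j * X ω j) - A ω * ∑ j, δ j * X ω j) * 1 ∂μ
      = 0 := by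
    refine normal_eq μ _ _ hZ2 (memLp_const 1) 1 one_pos (by simp) ?_
    intro t
    have h := hmin (α + t) β γ δ hγmem hδmem
    exact h.trans (le_of_eq (integral_congr_ae (ae_of_all _ fun ω => by ring)))
  simp only [mul_one] at eq1
  -- second normal equation
  have eq2 : ∫ ω, (Y ω - α - β * A ω - (∑ j, γ j * X ω j) - A ω * ∑ j, δ j * X ω j) * A ω ∂μ
      = 0 := by
    refine normal_eq μ _ _ hZ2 hA2 π hπ0 hA2mean ?_
    intro t
    have h := hmin α (β + t) γ δ hγmem hδmem
    exact h.trans (le_of_eq (integral_congr_ae (ae_of_all _ fun ω => by ring)))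
  -- expand the first normal equation
  have i1 : Integrable (fun ω => Y ω - α) μ := intY.sub (integrable_const α)
  have i2 : Integrable (fun ω => Y ω - α - β * A ω) μ := i1.sub (hAint.const_mul β)
  have i3 : Integrable (fun ω => Y ω - α - β * A ω - ∑ j, γ j * X ω j) μ := i2.sub intG
  have eqZ : ∫ ω, (Y ω - α - β * A ω - (∑ j, γ j * X ω j) - A ω * ∑ j, δ j * X ω j) ∂μ
      = (∫ ω, Y ω ∂μ) - α - β * π := by
    rw [integral_sub i3 intAD, integral_sub i2 intG, integral_sub i1 (hAint.const_mul β),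
      integral_sub intY (integrable_const α),
      integral_const, integral_const_mul, hAmean, hmeanG, hintAD2]
    simp
  -- expand the second normal equation
  have e2ptw : ∀ ω, (Y ω - α - β * A ω - (∑ j, γ j * X ω j) - A ω * ∑ j, δ j * X ω j) * A ω
      = Y ω * A ω - α * A ω - β * A ω - (∑ j, γ j * X ω j) * A ω
        - A ω * (∑ j, δ j * X ω j) := by
    intro ω
    have h2 := hA2ptw ω
    linear_combination (-(β + ∑ j, δ j * X ω j)) * h2
  have j1 : Integrable (fun ω => Y ω * A ω - α * A ω) μ := intYA.sub (hAint.const_mul α)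
  have j2 : Integrable (fun ω => Y ω * A ω - α * A ω - β * A ω) μ := j1.sub (hAint.const_mul β)
  have j3 : Integrable (fun ω => Y ω * A ω - α * A ω - β * A ω - (∑ j, γ j * X ω j) * A ω) μ :=
    j2.sub intGA
  have eqZA : ∫ ω, (Y ω - α - β * A ω - (∑ j, γ j * X ω j) - A ω * ∑ j, δ j * X ω j) * A ω ∂μ
      = (∫ ω, Y ω * A ω ∂μ) - α * π - β * π := by
    rw [integral_congr_ae (ae_of_all μ e2ptw), integral_sub j3 intAD, integral_sub j2 intGA,
      integral_sub j1 (hAint.const_mul β), integral_sub intYA (hAint.const_mul α),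
      integral_const_mul, integral_const_mul, hAmean, hintGA2, hintAD2]
    ring
  rw [eqZ] at eq1
  rw [eqZA] at eq2
  -- conclude
  have hYIA : ∫ ω, Y ω * (1 - A ω) ∂μ = (∫ ω, Y ω ∂μ) - ∫ ω, Y ω * A ω ∂μ := by
    have e : ∀ ω, Y ω * (1 - A ω) = Y ω - Y ω * A ω := fun ω => by ring
    rw [integral_congr_ae (ae_of_all μ e), integral_sub intY intYA]
  have hIY : ∫ ω, Y ω ∂μ = α + β * π := by linarith
  have hIYA : ∫ ω, Y ω * A ω ∂μ = α * π + β * π := by linarith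
  rw [hYIA, hIYA, hIY]
  have hπ' : π ≠ 0 := ne_of_gt hπ0
  have h1π : (1 : ℝ) - π ≠ 0 := by intro h; linarith
  field_simp
  ring
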